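/- Let ε' ∈ (0,1), C ≥ 1, c ∈ ℝ and ε > 0. Let ψ, θ : ℝ → ℝ satisfy, for all h with |h| ≤ ε: |ψ(h) − h/2| ≤ C·h², |θ(h)| ≤ C·|h|, and |θ(ψ(h)) − (1/4)·θ(h) − c·h| ≤ C·h². Then there exist K₀ ≥ 1 and ε̃ ∈ (0, ε] such that for every K ≥ K₀ and all h₁, h₂ ∈ (0, ε̃), setting h̃₁ := −ψ(−h₁) and h̃₂ := ψ(h₂) (which satisfy 0 < h̃ᵢ < hᵢ), the following implication holds: if |h₁·θ(h₂) + h₂·θ(−h₁)| ≤ K·h₁·h₂·(h₁+h₂)^{1−ε'}, then |h̃₁·θ(h̃₂) + h̃₂·θ(−h̃₁)| ≤ K·h̃₁·h̃₂·(h̃₁+h̃₂)^{1−ε'}. -/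

import Mathlib

set_option maxHeartbeats 1000000

private lemma second_order_bound_invariant.aux_poly (γ : ℝ) (h0 : 0 < γ) (h1 : γ ≤ 1) :
    1 + γ/2 ≤ (1-γ/12)^3*(1+γ) := by
  have g1 : 0 ≤ γ*(1-γ) := mul_nonneg h0.le (by linarith)
  have g2 : 0 ≤ γ*γ*γ*(1-γ) :=
    mul_nonneg (mul_nonneg (mul_nonneg h0.le h0.le) h0.le) (by linarith)
  have g3 : 0 ≤ γ*γ*γ := mul_nonneg (mul_nonneg h0.le h0.le) h0.le
  nlinarith [g1, g2, g3, h0.le]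

/-- Lemma 2.17 of the paper with all O-constants explicit: invariance of the
second-order difference bound under the dynamics. -/
theorem second_order_bound_invariant
    (ε' C c ε : ℝ) (hε' : ε' ∈ Set.Ioo (0:ℝ) 1) (hC : 1 ≤ C) (hε : 0 < ε)
    (ψ θ : ℝ → ℝ)
    (hψ : ∀ h : ℝ, |h| ≤ ε → |ψ h - h / 2| ≤ C * h ^ 2)
    (hθ : ∀ h : ℝ, |h| ≤ ε → |θ h| ≤ C * |h|)
    (hlaw : ∀ h : ℝ, |h| ≤ ε → |θ (ψ h) - (1/4) * θ h - c * h| ≤ C * h ^ 2) :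
    ∃ K₀ : ℝ, 1 ≤ K₀ ∧ ∃ εt ∈ Set.Ioc (0:ℝ) ε, ∀ K : ℝ, K₀ ≤ K →
      ∀ h₁ h₂ : ℝ, h₁ ∈ Set.Ioo 0 εt → h₂ ∈ Set.Ioo 0 εt →
        (0 < -ψ (-h₁) ∧ -ψ (-h₁) < h₁ ∧ 0 < ψ h₂ ∧ ψ h₂ < h₂) ∧
        (|h₁ * θ h₂ + h₂ * θ (-h₁)| ≤ K * h₁ * h₂ * (h₁ + h₂) ^ (1 - ε') →
          |(-ψ (-h₁)) * θ (ψ h₂) + ψ h₂ * θ (-(-ψ (-h₁)))| ≤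
            K * (-ψ (-h₁)) * ψ h₂ * ((-ψ (-h₁)) + ψ h₂) ^ (1 - ε')) := by
  obtain ⟨hε'0, hε'1⟩ := hε'
  have hC0 : (0:ℝ) < C := lt_of_lt_of_le one_pos hC
  have h2e : (1:ℝ) < 2 ^ ε' :=
    (Real.one_lt_rpow_iff_of_pos (by norm_num)).mpr (Or.inl ⟨by norm_num, hε'0⟩)
  obtain ⟨γ, hγdef⟩ : ∃ γ : ℝ, γ = 2 ^ ε' - 1 := ⟨_, rfl⟩
  have hγ0 : 0 < γ := by rw [hγdef]; linarith
  have hγ1 : γ ≤ 1 := by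
    have h2 : (2:ℝ) ^ ε' ≤ 2 ^ (1:ℝ) :=
      Real.rpow_le_rpow_of_exponent_le (by norm_num) hε'1.le
    rw [Real.rpow_one] at h2
    rw [hγdef]; linarith
  obtain ⟨A, hAdef⟩ : ∃ A : ℝ, A = C^2/4 + |c| * C + C := ⟨_, rfl⟩
  have hA0 : 0 < A := by
    have g1 : 0 ≤ |c| * C := mul_nonneg (abs_nonneg _) hC0.le
    have g2 : 0 < C^2/4 := by positivity
    rw [hAdef]; linarith
  refine ⟨max 1 (16*A/γ), le_max_left _ _,
    min ε (min (1/2) (γ/(24*C))), ⟨lt_min hε (lt_min (by norm_num) (by positivity)),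
      min_le_left _ _⟩, ?_⟩
  set εt : ℝ := min ε (min (1/2) (γ/(24*C))) with hεtdef
  have hεt0 : 0 < εt := lt_min hε (lt_min (by norm_num) (by positivity))
  have hεtε : εt ≤ ε := min_le_left _ _
  have hεth : εt ≤ 1/2 := le_trans (min_le_right _ _) (min_le_left _ _)
  have hεtγ : εt ≤ γ/(24*C) := le_trans (min_le_right _ _) (min_le_right _ _)
  intro K hK h₁ h₂ hh₁ hh₂
  obtain ⟨h₁0, h₁t⟩ := hh₁
  obtain ⟨h₂0, h₂t⟩ := hh₂
  have hK1 : (1:ℝ) ≤ K := le_trans (le_max_left _ _) hK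
  have hK0 : (0:ℝ) ≤ K := by linarith only [hK1]
  have hKA : 16 * A ≤ K * γ := by
    have h := le_trans (le_max_right _ _) hK
    rw [div_le_iff₀ hγ0] at h
    linarith only [h]
  obtain ⟨a, hadef⟩ : ∃ x : ℝ, x = -ψ (-h₁) := ⟨_, rfl⟩
  obtain ⟨b, hbdef⟩ : ∃ x : ℝ, x = ψ h₂ := ⟨_, rfl⟩
  rw [← hadef, ← hbdef]
  have hih₂ : |h₂| ≤ ε := by rw [abs_of_pos h₂0]; linarith only [h₂t, hεtε]
  have hih₁ : |(-h₁)| ≤ ε := by rw [abs_neg, abs_of_pos h₁0]; linarith only [h₁t, hεtε]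
  have hCεt : C * εt ≤ γ/24 := by
    have g1 : C * εt ≤ C * (γ/(24*C)) := mul_le_mul_of_nonneg_left hεtγ hC0.le
    have g2 : C * (γ/(24*C)) = γ/24 := by field_simp
    linarith only [g1, g2]
  have hCh₁ : C * h₁ ≤ γ/24 := by linarith only [mul_le_mul_of_nonneg_left h₁t.le hC0.le, hCεt]
  have hCh₂ : C * h₂ ≤ γ/24 := by linarith only [mul_le_mul_of_nonneg_left h₂t.le hC0.le, hCεt]
  have hbC : |b - h₂/2| ≤ C*h₂^2 := by rw [hbdef]; exact hψ h₂ hih₂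
  have haC : |a - h₁/2| ≤ C*h₁^2 := by
    calc |a - h₁/2| = |ψ (-h₁) - (-h₁)/2| := by
          rw [hadef, ← abs_neg]; congr 1; ring
      _ ≤ C*(-h₁)^2 := hψ (-h₁) hih₁
      _ = C*h₁^2 := by ring
  have ha1 : |a - h₁/2| ≤ (γ/24)*h₁ := by
    refine le_trans haC ?_
    calc C*h₁^2 = (C*h₁)*h₁ := by ring
      _ ≤ (γ/24)*h₁ := mul_le_mul_of_nonneg_right hCh₁ h₁0.le
  have hb1 : |b - h₂/2| ≤ (γ/24)*h₂ := by
    refine le_trans hbC ?_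
    calc C*h₂^2 = (C*h₂)*h₂ := by ring
      _ ≤ (γ/24)*h₂ := mul_le_mul_of_nonneg_right hCh₂ h₂0.le
  obtain ⟨ha1l, ha1r⟩ := abs_le.mp ha1
  obtain ⟨hb1l, hb1r⟩ := abs_le.mp hb1
  have hγh₁ : γ * h₁ ≤ h₁ := by linarith only [mul_le_mul_of_nonneg_right hγ1 h₁0.le]
  have hγh₂ : γ * h₂ ≤ h₂ := by linarith only [mul_le_mul_of_nonneg_right hγ1 h₂0.le]
  have hγh₁' : 0 ≤ γ * h₁ := mul_nonneg hγ0.le h₁0.le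
  have hγh₂' : 0 ≤ γ * h₂ := mul_nonneg hγ0.le h₂0.le
  have ha_lb : ((1-γ/12)/2)*h₁ ≤ a := by linarith only [ha1l]
  have hb_lb : ((1-γ/12)/2)*h₂ ≤ b := by linarith only [hb1l]
  have ha_pos : 0 < a := by linarith only [ha1l, hγh₁, h₁0]
  have hb_pos : 0 < b := by linarith only [hb1l, hγh₂, h₂0]
  have ha_lt : a < h₁ := by linarith only [ha1r, hγh₁, h₁0]
  have hb_lt : b < h₂ := by linarith only [hb1r, hγh₂, h₂0]
  refine ⟨⟨ha_pos, ha_lt, hb_pos, hb_lt⟩, ?_⟩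
  intro hyp
  -- basic bounds on θ
  have ht2 : |θ h₂| ≤ C*h₂ := by
    have h := hθ h₂ hih₂; rwa [abs_of_pos h₂0] at h
  have ht1 : |θ (-h₁)| ≤ C*h₁ := by
    have h := hθ (-h₁) hih₁; rwa [abs_neg, abs_of_pos h₁0] at h
  have hu : |θ b - (1/4)*θ h₂ - c*h₂| ≤ C*h₂^2 := by
    have h := hlaw h₂ hih₂; rwa [← hbdef] at h
  have hna : -a = ψ (-h₁) := by rw [hadef]; ring
  have hv : |θ (-a) - (1/4)*θ (-h₁) - c*(-h₁)| ≤ C*h₁^2 := by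
    have h := hlaw (-h₁) hih₁
    rw [← hna] at h
    calc |θ (-a) - (1/4)*θ (-h₁) - c*(-h₁)| ≤ C*(-h₁)^2 := h
      _ = C*h₁^2 := by ring
  -- the algebraic identity
  have key : a * θ b + b * θ (-a) =
      (1/8)*(h₁*θ h₂ + h₂*θ (-h₁))
      + (1/4)*((a - h₁/2)*θ h₂)
      + (1/4)*((b - h₂/2)*θ (-h₁))
      + c*((a - h₁/2)*h₂ - (b - h₂/2)*h₁)
      + a*(θ b - (1/4)*θ h₂ - c*h₂)
      + b*(θ (-a) - (1/4)*θ (-h₁) - c*(-h₁)) := by ring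
  -- bounds on the pieces
  have hT2 : |(1/4)*((a - h₁/2)*θ h₂)| ≤ (1/4)*((C*h₁^2)*(C*h₂)) := by
    rw [abs_mul, abs_mul]
    have h14 : |(1/4:ℝ)| = 1/4 := by norm_num
    rw [h14]
    exact mul_le_mul_of_nonneg_left
      (mul_le_mul haC ht2 (abs_nonneg _) (by positivity)) (by norm_num)
  have hT3 : |(1/4)*((b - h₂/2)*θ (-h₁))| ≤ (1/4)*((C*h₂^2)*(C*h₁)) := by
    rw [abs_mul, abs_mul]
    have h14 : |(1/4:ℝ)| = 1/4 := by norm_num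
    rw [h14]
    exact mul_le_mul_of_nonneg_left
      (mul_le_mul hbC ht1 (abs_nonneg _) (by positivity)) (by norm_num)
  have hT4 : |c*((a - h₁/2)*h₂ - (b - h₂/2)*h₁)| ≤ |c| * ((C*h₁^2)*h₂ + (C*h₂^2)*h₁) := by
    rw [abs_mul]
    refine mul_le_mul_of_nonneg_left ?_ (abs_nonneg c)
    calc |(a - h₁/2)*h₂ - (b - h₂/2)*h₁|
        ≤ |(a - h₁/2)*h₂| + |(b - h₂/2)*h₁| := abs_sub _ _
      _ = |a - h₁/2| * |h₂| + |b - h₂/2| * |h₁| := by rw [abs_mul, abs_mul]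
      _ ≤ (C*h₁^2)*h₂ + (C*h₂^2)*h₁ := by
          rw [abs_of_pos h₂0, abs_of_pos h₁0]
          have g1 := mul_le_mul_of_nonneg_right haC h₂0.le
          have g2 := mul_le_mul_of_nonneg_right hbC h₁0.le
          linarith
  have hT5 : |a*(θ b - (1/4)*θ h₂ - c*h₂)| ≤ h₁*(C*h₂^2) := by
    rw [abs_mul, abs_of_pos ha_pos]
    exact mul_le_mul ha_lt.le hu (abs_nonneg _) h₁0.le
  have hT6 : |b*(θ (-a) - (1/4)*θ (-h₁) - c*(-h₁))| ≤ h₂*(C*h₁^2) := by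
    rw [abs_mul, abs_of_pos hb_pos]
    exact mul_le_mul hb_lt.le hv (abs_nonneg _) h₂0.le
  have hT1 : |(1/8)*(h₁*θ h₂ + h₂*θ (-h₁))| = (1/8)*|h₁*θ h₂ + h₂*θ (-h₁)| := by
    rw [abs_mul]; norm_num
  have tri6 : ∀ x1 x2 x3 x4 x5 x6 : ℝ,
      |x1+x2+x3+x4+x5+x6| ≤ |x1|+|x2|+|x3|+|x4|+|x5|+|x6| := by
    intro x1 x2 x3 x4 x5 x6
    have a1 := abs_add_le (x1+x2+x3+x4+x5) x6
    have a2 := abs_add_le (x1+x2+x3+x4) x5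
    have a3 := abs_add_le (x1+x2+x3) x4
    have a4 := abs_add_le (x1+x2) x3
    have a5 := abs_add_le x1 x2
    linarith
  have sum6 : |a*θ b + b*θ (-a)| ≤
      (1/8)*|h₁*θ h₂ + h₂*θ (-h₁)| + A*(h₁*h₂*(h₁+h₂)) := by
    rw [key, hAdef]
    have tri := tri6 ((1/8)*(h₁*θ h₂ + h₂*θ (-h₁)))
      ((1/4)*((a - h₁/2)*θ h₂)) ((1/4)*((b - h₂/2)*θ (-h₁)))
      (c*((a - h₁/2)*h₂ - (b - h₂/2)*h₁))
      (a*(θ b - (1/4)*θ h₂ - c*h₂))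
      (b*(θ (-a) - (1/4)*θ (-h₁) - c*(-h₁)))
    linarith only [tri, hT1, hT2, hT3, hT4, hT5, hT6]
  -- rpow facts
  obtain ⟨P, hPdef⟩ : ∃ x : ℝ, x = (h₁ + h₂) ^ (1 - ε') := ⟨_, rfl⟩
  rw [← hPdef] at hyp
  have hs0 : 0 < h₁ + h₂ := by linarith only [h₁0, h₂0]
  have hs1 : h₁ + h₂ ≤ 1 := by linarith only [h₁t, h₂t, hεth]
  have hP0 : 0 < P := hPdef ▸ Real.rpow_pos_of_pos hs0 _
  have hsle : h₁ + h₂ ≤ P := by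
    have e : (h₁+h₂)^(ε') * (h₁+h₂)^(1-ε') = (h₁+h₂)^(1:ℝ) := by
      rw [← Real.rpow_add hs0]; norm_num
    rw [Real.rpow_one] at e
    have l : (h₁+h₂)^(ε') ≤ 1 := Real.rpow_le_one hs0.le hs1 hε'0.le
    have l2 := mul_le_mul_of_nonneg_right l (le_of_lt (Real.rpow_pos_of_pos hs0 (1-ε')))
    rw [one_mul] at l2
    rw [hPdef]
    linarith only [e ▸ l2]
  -- step 1: absolute bound with P
  have step1 : |a*θ b + b*θ (-a)| ≤ (K*(1+γ/2)/8)*(h₁*h₂*P) := by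
    have e1 : A*(h₁*h₂*(h₁+h₂)) ≤ A*(h₁*h₂*P) := by
      refine mul_le_mul_of_nonneg_left ?_ hA0.le
      exact mul_le_mul_of_nonneg_left hsle (mul_nonneg h₁0.le h₂0.le)
    have e2 : (1/8)*|h₁*θ h₂ + h₂*θ (-h₁)| ≤ (1/8)*(K*h₁*h₂*P) :=
      mul_le_mul_of_nonneg_left hyp (by norm_num)
    have e3 : 0 ≤ K*γ/16 - A := by linarith only [hKA]
    have e4 : 0 ≤ h₁*h₂*P := mul_nonneg (mul_nonneg h₁0.le h₂0.le) hP0.le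
    linarith only [sum6, e1, e2, mul_nonneg e3 e4]
  -- polynomial fact
  have poly : 1 + γ/2 ≤ (1-γ/12)^3*(1+γ) := second_order_bound_invariant.aux_poly γ hγ0 hγ1
  have step2 : (K*(1+γ/2)/8)*(h₁*h₂*P) ≤ (K*((1-γ/12)^3*(1+γ))/8)*(h₁*h₂*P) := by
    refine mul_le_mul_of_nonneg_right ?_ (mul_nonneg (mul_nonneg h₁0.le h₂0.le) hP0.le)
    have g := mul_le_mul_of_nonneg_left poly hK0
    linarith only [g]
  -- lower bound for the right-hand side
  have hκ0 : (0:ℝ) ≤ (1-γ/12)/2 := by linarith only [hγ1]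
  have hsum_lb : ((1-γ/12)/2)*(h₁+h₂) ≤ a+b := by linarith only [ha_lb, hb_lb]
  have hQ1 : (((1-γ/12)/2)*(h₁+h₂))^(1-ε') ≤ (a+b)^(1-ε') :=
    Real.rpow_le_rpow (mul_nonneg hκ0 hs0.le) hsum_lb (by linarith only [hε'1])
  have hsplit : (((1-γ/12)/2)*(h₁+h₂))^(1-ε')
      = ((1-γ/12)/2)^(1-ε') * P := by
    rw [hPdef, ← Real.mul_rpow hκ0 hs0.le]
  have hhalfpow : ((1/2:ℝ))^(1-ε') = (1+γ)/2 := by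
    have e1 : ((2:ℝ)⁻¹)^(1-ε') = ((2:ℝ)^(1-ε'))⁻¹ := Real.inv_rpow (by norm_num) _
    have e2 : (2:ℝ)^(1-ε') = 2 / 2^ε' := by
      rw [Real.rpow_sub (by norm_num : (0:ℝ) < 2), Real.rpow_one]
    calc ((1/2:ℝ))^(1-ε') = ((2:ℝ)⁻¹)^(1-ε') := by rw [one_div]
      _ = ((2:ℝ)^(1-ε'))⁻¹ := e1
      _ = (2 / 2^ε')⁻¹ := by rw [e2]
      _ = 2^ε'/2 := by rw [inv_div]
      _ = (1+γ)/2 := by rw [hγdef]; ring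
  have hbase : (1-γ/12)*((1+γ)/2) ≤ ((1-γ/12)/2)^(1-ε') := by
    have e : ((1-γ/12)/2 : ℝ) = (1-γ/12)*(1/2) := by ring
    rw [e, Real.mul_rpow (by linarith only [hγ1]) (by norm_num), hhalfpow]
    have f1 : (1-γ/12)^((1:ℝ)) ≤ (1-γ/12)^(1-ε') :=
      Real.rpow_le_rpow_of_exponent_ge (by linarith only [hγ1]) (by linarith only [hγ0])
        (by linarith only [hε'0])
    rw [Real.rpow_one] at f1
    have g : (0:ℝ) ≤ (1+γ)/2 := by linarith only [hγ0]
    exact mul_le_mul_of_nonneg_right f1 g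
  have hQ : (1-γ/12)*((1+γ)/2)*P ≤ (a+b)^(1-ε') := by
    calc (1-γ/12)*((1+γ)/2)*P ≤ ((1-γ/12)/2)^(1-ε') * P :=
          mul_le_mul_of_nonneg_right hbase hP0.le
      _ = (((1-γ/12)/2)*(h₁+h₂))^(1-ε') := hsplit.symm
      _ ≤ (a+b)^(1-ε') := hQ1
  -- final assembly
  have final : (K*((1-γ/12)^3*(1+γ))/8)*(h₁*h₂*P) ≤ K*a*b*((a+b)^(1-ε')) := by
    have s1 : K*(((1-γ/12)/2)*h₁) ≤ K*a := mul_le_mul_of_nonneg_left ha_lb hK0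
    have s2 : (K*(((1-γ/12)/2)*h₁))*(((1-γ/12)/2)*h₂) ≤ (K*a)*b :=
      mul_le_mul s1 hb_lb (mul_nonneg hκ0 h₂0.le) (mul_nonneg hK0 ha_pos.le)
    have s3 : ((K*(((1-γ/12)/2)*h₁))*(((1-γ/12)/2)*h₂))*((1-γ/12)*((1+γ)/2)*P)
        ≤ ((K*a)*b)*((a+b)^(1-ε')) := by
      refine mul_le_mul s2 hQ ?_ ?_
      · exact mul_nonneg (mul_nonneg (by linarith only [hγ1]) (by linarith only [hγ0])) hP0.le
      · exact mul_nonneg (mul_nonneg hK0 ha_pos.le) hb_pos.le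
    calc (K*((1-γ/12)^3*(1+γ))/8)*(h₁*h₂*P)
        = ((K*(((1-γ/12)/2)*h₁))*(((1-γ/12)/2)*h₂))*((1-γ/12)*((1+γ)/2)*P) := by ring
      _ ≤ ((K*a)*b)*((a+b)^(1-ε')) := s3
      _ = K*a*b*((a+b)^(1-ε')) := by ring
  calc |a * θ b + b * θ (-a)| ≤ (K*(1+γ/2)/8)*(h₁*h₂*P) := step1
    _ ≤ (K*((1-γ/12)^3*(1+γ))/8)*(h₁*h₂*P) := step2
    _ ≤ K*a*b*((a+b)^(1-ε')) := final
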